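/- Let λ : [0,∞) → ℝ be continuous and nonnegative and let y solve y'' = λ·y with y(0)=1, y'(0)=h ≥ 0. If J : [0,T) → ℝ is a positive C² function with J'' ≤ λ·J, J(0)=1 and J'(0) ≤ h, then J(t) ≤ y(t) for all t ∈ [0,T). -/

import Mathlib

/-- Comparison lemma: if `J` is a positive `C²` function on `[0,T)` with
`J'' ≤ l·J`, `J 0 = 1`, `J' 0 ≤ h`, and `y` solves `y'' = l·y` with the same
initial data `y 0 = 1`, `y' 0 = h ≥ 0`, then `J ≤ y` on `[0,T)`. -/
theorem stmt_3 (l y y' J J' J'' : ℝ → ℝ) (h : ℝ) (T : EReal)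
    (hl : ContinuousOn l (Set.Ici 0))
    (hlnn : ∀ t ≥ (0:ℝ), 0 ≤ l t)
    (hh : 0 ≤ h)
    (hy : ∀ t ≥ (0:ℝ), HasDerivAt y (y' t) t)
    (hy' : ∀ t ≥ (0:ℝ), HasDerivAt y' (l t * y t) t)
    (hy'c : ContinuousOn y' (Set.Ici 0))
    (hy0 : y 0 = 1) (hy'0 : y' 0 = h)
    (hT : 0 < T)
    (hJpos : ∀ t : ℝ, 0 ≤ t → (t : EReal) < T → 0 < J t)
    (hJ : ∀ t : ℝ, 0 ≤ t → (t : EReal) < T → HasDerivAt J (J' t) t)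
    (hJ' : ∀ t : ℝ, 0 ≤ t → (t : EReal) < T → HasDerivAt J' (J'' t) t)
    (hJ''c : ContinuousOn J'' {t : ℝ | 0 ≤ t ∧ (t : EReal) < T})
    (hJineq : ∀ t : ℝ, 0 ≤ t → (t : EReal) < T → J'' t ≤ l t * J t)
    (hJ0 : J 0 = 1) (hJ'0 : J' 0 ≤ h) :
    ∀ t : ℝ, 0 ≤ t → (t : EReal) < T → J t ≤ y t := by
  have ycont : ContinuousOn y (Set.Ici 0) := fun t ht =>
    ((hy t ht).continuousAt).continuousWithinAt
  have y'cont : ContinuousOn y' (Set.Ici 0) := fun t ht =>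
    ((hy' t ht).continuousAt).continuousWithinAt
  -- Step 1: y > 0 on [0, ∞)
  have ypos : ∀ t ≥ (0:ℝ), 0 < y t := by
    by_contra hne
    push_neg at hne
    obtain ⟨t0, ht0, hyt0⟩ := hne
    set S : Set ℝ := Set.Ici 0 ∩ y ⁻¹' Set.Iic 0 with hSdef
    have hSne : S.Nonempty := ⟨t0, ht0, hyt0⟩
    have hScl : IsClosed S :=
      ycont.preimage_isClosed_of_isClosed isClosed_Ici isClosed_Iic
    have hSbdd : BddBelow S := ⟨0, fun x hx => hx.1⟩
    set a := sInf S with ha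
    have haS : a ∈ S := hScl.csInf_mem hSne hSbdd
    have ha0 : 0 ≤ a := haS.1
    have hapos : 0 < a := by
      rcases lt_or_eq_of_le ha0 with h1 | h1
      · exact h1
      · exfalso
        have : y 0 ≤ 0 := by rw [← h1] at haS; exact haS.2
        rw [hy0] at this; linarith
    have hyIco : ∀ t ∈ Set.Ico (0:ℝ) a, 0 < y t := by
      intro t ht
      by_contra hc
      push_neg at hc
      have : t ∈ S := ⟨ht.1, hc⟩
      exact absurd (csInf_le hSbdd this) (not_le.mpr ht.2)
    -- y' is monotone on [0,a]
    have mono1 : MonotoneOn y' (Set.Icc 0 a) := by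
      apply monotoneOn_of_deriv_nonneg (convex_Icc 0 a)
        (y'cont.mono (Set.Icc_subset_Ici_self))
      · intro x hx
        rw [interior_Icc] at hx
        exact ((hy' x hx.1.le).differentiableAt).differentiableWithinAt
      · intro x hx
        rw [interior_Icc] at hx
        rw [(hy' x hx.1.le).deriv]
        exact mul_nonneg (hlnn x hx.1.le) (hyIco x ⟨hx.1.le, hx.2⟩).le
    have y'nn : ∀ t ∈ Set.Icc (0:ℝ) a, 0 ≤ y' t := by
      intro t ht
      have := mono1 ⟨le_refl 0, ha0⟩ ht ht.1
      rw [hy'0] at this; linarith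
    have mono2 : MonotoneOn y (Set.Icc 0 a) := by
      apply monotoneOn_of_deriv_nonneg (convex_Icc 0 a)
        (ycont.mono (Set.Icc_subset_Ici_self))
      · intro x hx
        rw [interior_Icc] at hx
        exact ((hy x hx.1.le).differentiableAt).differentiableWithinAt
      · intro x hx
        rw [interior_Icc] at hx
        rw [(hy x hx.1.le).deriv]
        exact y'nn x ⟨hx.1.le, hx.2.le⟩
    have : y 0 ≤ y a := mono2 ⟨le_refl 0, ha0⟩ ⟨ha0, le_refl a⟩ ha0
    rw [hy0] at this
    have := haS.2
    simp only [Set.mem_preimage, Set.mem_Iic] at this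
    linarith
  -- The domain D
  set D : Set ℝ := {t : ℝ | 0 ≤ t ∧ (t : EReal) < T} with hDdef
  have hDconv : Convex ℝ D := by
    apply Set.OrdConnected.convex
    constructor
    intro u hu v hv z hz
    exact ⟨hu.1.trans hz.1, lt_of_le_of_lt (EReal.coe_le_coe_iff.mpr hz.2) hv.2⟩
  have h0D : (0:ℝ) ∈ D := ⟨le_refl 0, by exact_mod_cast hT⟩
  -- Step 2: the Wronskian W = J'·y - J·y' is antitone on D, hence ≤ 0
  set W : ℝ → ℝ := fun s => J' s * y s - J s * y' s with hWdef
  have hWd : ∀ t ∈ D, HasDerivAt W ((J'' t - l t * J t) * y t) t := by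
    intro t ht
    have := ((hJ' t ht.1 ht.2).mul (hy t ht.1)).sub
      ((hJ t ht.1 ht.2).mul (hy' t ht.1))
    convert this using 1
    · rfl
    · rfl
    · rfl
    · ring
  have hWanti : AntitoneOn W D := by
    apply antitoneOn_of_deriv_nonpos hDconv
    · exact fun t ht => (hWd t ht).continuousAt.continuousWithinAt
    · exact fun t ht =>
        ((hWd t (interior_subset ht)).differentiableAt).differentiableWithinAt
    · intro t ht
      have ht' := interior_subset ht
      rw [(hWd t ht').deriv]
      exact mul_nonpos_of_nonpos_of_nonneg
        (sub_nonpos.mpr (hJineq t ht'.1 ht'.2)) (ypos t ht'.1).le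
  have hWle : ∀ t ∈ D, W t ≤ 0 := by
    intro t ht
    have h1 : W t ≤ W 0 := hWanti h0D ht ht.1
    have h2 : W 0 ≤ 0 := by
      simp only [hWdef, hy0, hJ0, hy'0, mul_one, one_mul]
      linarith
    linarith
  -- Step 3: G = J / y is antitone on D, hence ≤ 1
  set G : ℝ → ℝ := fun s => J s / y s with hGdef
  have hGd : ∀ t ∈ D, HasDerivAt G (W t / (y t)^2) t := by
    intro t ht
    exact (hJ t ht.1 ht.2).div (hy t ht.1) (ypos t ht.1).ne'
  have hGanti : AntitoneOn G D := by
    apply antitoneOn_of_deriv_nonpos hDconv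
    · exact fun t ht => (hGd t ht).continuousAt.continuousWithinAt
    · exact fun t ht =>
        ((hGd t (interior_subset ht)).differentiableAt).differentiableWithinAt
    · intro t ht
      have ht' := interior_subset ht
      rw [(hGd t ht').deriv]
      exact div_nonpos_of_nonpos_of_nonneg (hWle t ht') (sq_nonneg _)
  intro t ht0 htT
  have hG1 : G t ≤ G 0 := hGanti h0D ⟨ht0, htT⟩ ht0
  have : G 0 = 1 := by simp [hGdef, hJ0, hy0]
  rw [this] at hG1
  exact (div_le_one (ypos t ht0)).mp hG1
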